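/- On the normalized Hochschild cochain subcomplex consisting of cochains f with f(a_1,…,a_n) = 0 whenever some a_i = 1, the operator Δ satisfies Δ² = 0 identically (on the chain level). -/

import Mathlib

/- Model: Hochschild cochains C^n(A,M) are modeled as functions (Fin n → A) → M. -/

variable {R A : Type*} [CommRing R] [Ring A] [Algebra R A]

/-- reindexing along an equality of arities -/
def castFn {A : Type*} {k k' : ℕ} (h : k = k') (v : Fin k' → A) : Fin k → A :=
  fun i => v ⟨(i : ℕ), h ▸ i.isLt⟩

/-- cyclic rotation of a tuple by `o` steps -/
def rotFn {A : Type*} {k : ℕ} (o : ℕ) (v : Fin k → A) : Fin k → A :=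
  fun j => v ⟨((j : ℕ) + o) % k, Nat.mod_lt _ (Nat.lt_of_le_of_lt (Nat.zero_le _) j.isLt)⟩

/-- The Hochschild differential on `A`-valued cochains. -/
def hochδ {n : ℕ} (f : (Fin n → A) → A) : (Fin (n + 1) → A) → A :=
  fun a =>
    a 0 * f (fun i => a i.succ)
      + ∑ j : Fin n, ((-1 : ℤ) ^ ((j : ℕ) + 1)) •
          f (fun k => if (k : ℕ) < (j : ℕ) then a k.castSucc
              else if (k : ℕ) = (j : ℕ) then a j.castSucc * a j.succ else a k.succ)
      + ((-1 : ℤ) ^ (n + 1)) • (f (fun i => a i.castSucc) * a (Fin.last n))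

/-- The Hochschild differential on `A*`-valued cochains, for the bimodule
`A* = Hom(A,R)` with `(a·φ·b)(x) = φ(b·x·a)`. -/
def hochδDual {n : ℕ} (f : (Fin n → A) → Module.Dual R A) :
    (Fin (n + 1) → A) → Module.Dual R A :=
  fun a =>
    (f (fun i => a i.succ)).comp (LinearMap.mulRight R (a 0))
      + ∑ j : Fin n, ((-1 : ℤ) ^ ((j : ℕ) + 1)) •
          f (fun k => if (k : ℕ) < (j : ℕ) then a k.castSucc
              else if (k : ℕ) = (j : ℕ) then a j.castSucc * a j.succ else a k.succ)
      + ((-1 : ℤ) ^ (n + 1)) •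
          (f (fun i => a i.castSucc)).comp (LinearMap.mulLeft R (a (Fin.last n)))

/-- Cup product of Hochschild cochains. -/
def cupFn {n m : ℕ} (f : (Fin n → A) → A) (g : (Fin m → A) → A) :
    (Fin (n + m) → A) → A :=
  fun a => f (fun i => a ⟨(i : ℕ), by have := i.isLt; omega⟩) *
    g (fun j => a ⟨n + (j : ℕ), by have := j.isLt; omega⟩)

/-- Gerstenhaber's composition `f ∘_j g` at the (0-indexed) slot `j`. -/
def compAt {p q : ℕ} (j : ℕ) (f : (Fin (p + 1) → A) → A) (g : (Fin (q + 1) → A) → A) :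
    (Fin (p + q + 1) → A) → A :=
  fun a => f (fun k =>
    if (k : ℕ) < j then a ⟨(k : ℕ), by have := k.isLt; omega⟩
    else if (k : ℕ) = j then g (fun l => a ⟨(k : ℕ) + (l : ℕ), by have := k.isLt; have := l.isLt; omega⟩)
    else a ⟨(k : ℕ) + q, by have := k.isLt; omega⟩)

/-- Gerstenhaber's pre-Lie product `f ∘ g = Σ_j (-1)^{(j-1)(m-1)} f ∘_j g`. -/
def circFn {p q : ℕ} (f : (Fin (p + 1) → A) → A) (g : (Fin (q + 1) → A) → A) :
    (Fin (p + q + 1) → A) → A :=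
  fun a => ∑ j : Fin (p + 1), ((-1 : ℤ) ^ ((j : ℕ) * q)) • compAt (j : ℕ) f g a

/-- The Gerstenhaber bracket `[f,g] = f∘g - (-1)^{(n-1)(m-1)} g∘f`. -/
def gerstFn {p q : ℕ} (f : (Fin (p + 1) → A) → A) (g : (Fin (q + 1) → A) → A) :
    (Fin (p + q + 1) → A) → A :=
  fun a => circFn f g a - ((-1 : ℤ) ^ (p * q)) • circFn g f (castFn (by omega) a)

/-- `Df` is the `Δ`-operator applied to `f ∈ C^{n+1}(A,A)`, characterized through the
inner product `B` by `⟨Δf(a_1,…,a_n), x⟩ = Σ_i (-1)^{i·n} ⟨f(cyclic rotation of (a,x)), 1⟩`. -/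
def IsDelta (B : LinearMap.BilinForm R A) {n : ℕ}
    (f : (Fin (n + 1) → A) → A) (Df : (Fin n → A) → A) : Prop :=
  ∀ (a : Fin n → A) (x : A),
    B (Df a) x = ∑ i : Fin (n + 1),
      ((-1 : ℤ) ^ (((i : ℕ) + 1) * n)) • B (f (rotFn (i : ℕ) (Fin.snoc a x))) 1

/-- on the normalized Hochschild cochain subcomplex (cochains vanishing
whenever some argument equals the unit `1`), `Δ² = 0` holds identically on the chain
level. -/
theorem Delta_squared_zero_on_normalized
    (B : LinearMap.BilinForm R A) [Module.Finite R A]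
    (hsymm : ∀ a b : A, B a b = B b a)
    (hinv : ∀ a b c : A, B (a * b) c = B a (b * c))
    (hnd : B.Nondegenerate)
    {p : ℕ} (f : (Fin (p + 2) → A) → A)
    (hnorm : ∀ (a : Fin (p + 2) → A) (i : Fin (p + 2)), a i = 1 → f a = 0)
    (Df : (Fin (p + 1) → A) → A) (hDf : IsDelta B f Df)
    (DDf : (Fin p → A) → A) (hDDf : IsDelta B Df DDf) :
    ∀ a : Fin p → A, DDf a = 0 := by
  -- Key: Δf paired with 1 vanishes, since every rotation of (b,1) contains a 1.
  have key : ∀ b : Fin (p + 1) → A, B (Df b) 1 = 0 := by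
    intro b
    rw [hDf b 1]
    apply Finset.sum_eq_zero
    intro j _
    set o := (j : ℕ) with ho
    have hol : o < p + 2 := j.isLt
    -- index i that gets mapped to the last slot by the rotation
    set inat : ℕ := (p + 1 + (p + 2) - o) % (p + 2) with hinat
    have hlt : inat < p + 2 := Nat.mod_lt _ (by omega)
    have hi : (inat + o) % (p + 2) = p + 1 := by
      rw [hinat, Nat.mod_add_mod]
      have : p + 1 + (p + 2) - o + o = (p + 2) + (p + 1) := by omega
      rw [this, Nat.add_mod_left, Nat.mod_eq_of_lt (by omega)]
    have hz : f (rotFn o (Fin.snoc b 1)) = 0 := by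
      apply hnorm _ ⟨inat, hlt⟩
      simp only [rotFn]
      have heq : ∀ h : (inat + o) % (p + 2) < p + 2,
          (⟨(inat + o) % (p + 2), h⟩ : Fin (p + 2)) = Fin.last (p + 1) :=
        fun h => Fin.ext (by simpa using hi)
      rw [heq, Fin.snoc_last]
    rw [hz]
    simp
  intro a
  apply hnd.1
  intro x
  rw [hDDf a x]
  apply Finset.sum_eq_zero
  intro i _
  rw [key]
  simp
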